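/- Two finite trees are isomorphic if and only if they are 𝔰¹-equivalent, i.e., their multisets {𝔰¹_G(v) : v ∈ V} of node labels coincide, where 𝔰¹ is the perfect-aggregation (color-refinement with a distinguished root) labeling. -/

import Mathlib

/-- Hereditarily structured labels of refinement depth `l`. -/
def LblT : ℕ → Type
  | 0 => ℕ
  | l + 1 => LblT l × Multiset (LblT l)

variable {V : Type} [Fintype V] [DecidableEq V]

/-- The perfect-aggregation (`𝔰`) label of node `i` at refinement level `l`, starting
from the base coloring `c`:  level `0` is the base color, and level `l+1` pairs the
previous label with the multiset of previous labels of the neighbors. -/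
def sLabel (G : SimpleGraph V) [DecidableRel G.Adj] (c : V → ℕ) :
    (l : ℕ) → V → LblT l
  | 0, i => c i
  | l + 1, i =>
      ((sLabel G c l i, (G.neighborFinset i).val.map (sLabel G c l)) :
        LblT l × Multiset (LblT l))

/-- The base coloring `i ↦ Σ_q q·δ_{i,i_q}` determined by the list of distinguished
nodes `pref = [i₁, …, i_q]` (1-indexed, as in the paper). -/
def baseColor (pref : List V) (i : V) : ℕ :=
  ((List.range pref.length).map fun q => if pref[q]? = some i then q + 1 else 0).sum

/-- The row of node `i` in the label matrix: its labels at all levels. -/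
def sRow (G : SimpleGraph V) [DecidableRel G.Adj] (c : V → ℕ) (i : V) :
    (l : ℕ) → LblT l :=
  fun l => sLabel G c l i

/-- Type of `r`-fold aggregated labels: at depth `0`, a label matrix regarded as the
multiset of its rows; each aggregation step forms a multiset. -/
def AggT : ℕ → Type
  | 0 => Multiset ((l : ℕ) → LblT l)
  | r + 1 => Multiset (AggT r)

/-- The aggregated label `𝔰ᵏ_G(i₁,…,i_q)` where `pref = [i₁,…,i_q]` and `r` further
distinguished nodes remain to be chosen (`r = k - q`). -/
def sAgg (G : SimpleGraph V) [DecidableRel G.Adj] : (r : ℕ) → List V → AggT r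
  | 0, pref => Finset.univ.val.map (fun i => sRow G (baseColor pref) i)
  | r + 1, pref =>
      ((Finset.univ.filter (fun i => i ∉ pref)).val.map
        (fun i => sAgg G r (pref ++ [i])))

/-- The `𝔰ᵏ` fingerprint of the graph `G`. -/
def sFingerprint (G : SimpleGraph V) [DecidableRel G.Adj] (k : ℕ) : AggT k :=
  sAgg G k []
set_option linter.unusedSectionVars false
namespace S1Proof
open SimpleGraph

variable {V : Type} [Fintype V] [DecidableEq V]

lemma sLabel_zero (G : SimpleGraph V) [DecidableRel G.Adj] (c : V → ℕ) (i : V) :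
    sLabel G c 0 i = c i := rfl

lemma sLabel_succ (G : SimpleGraph V) [DecidableRel G.Adj] (c : V → ℕ) (l : ℕ) (i : V) :
    sLabel G c (l + 1) i =
      ((sLabel G c l i, (G.neighborFinset i).val.map (sLabel G c l)) :
        LblT l × Multiset (LblT l)) := rfl

lemma baseColor_single (r i : V) : baseColor [r] i = if r = i then 1 else 0 := by
  simp [baseColor, List.range_succ]

/-- Projection to the previous level. -/
def down (l : ℕ) (x : LblT (l + 1)) : LblT l := (x : LblT l × Multiset (LblT l)).1

lemma down_sLabel (G : SimpleGraph V) [DecidableRel G.Adj] (c : V → ℕ) (l : ℕ) (i : V) :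
    down l (sLabel G c (l + 1) i) = sLabel G c l i := rfl

/-- View a level-0 label as a natural number. -/
def lbl0 : LblT 0 → ℕ := fun x => x

/-- Whether a label contains a nonzero base color somewhere. -/
def hasOne : (l : ℕ) → LblT l → Prop
  | 0, x => lbl0 x ≠ 0
  | l + 1, x => hasOne l (x : LblT l × Multiset (LblT l)).1 ∨
      ∃ y ∈ (x : LblT l × Multiset (LblT l)).2, hasOne l y

end S1Proof

namespace S1Proof
open SimpleGraph Walk

variable {V : Type} [Fintype V] [DecidableEq V]

lemma hasOne_zero (x : LblT 0) : hasOne 0 x ↔ lbl0 x ≠ 0 := Iff.rfl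

lemma hasOne_succ (l : ℕ) (x : LblT (l + 1)) :
    hasOne (l + 1) x ↔ hasOne l (x : LblT l × Multiset (LblT l)).1 ∨
      ∃ y ∈ (x : LblT l × Multiset (LblT l)).2, hasOne l y := Iff.rfl

lemma hasOne_iff_dist_le (G : SimpleGraph V) [DecidableRel G.Adj] (hc : G.Connected)
    (r : V) : ∀ (l : ℕ) (i : V),
    hasOne l (sLabel G (baseColor [r]) l i) ↔ G.dist r i ≤ l := by
  intro l
  induction l with
  | zero =>
    intro i
    rw [hasOne_zero]
    have : lbl0 (sLabel G (baseColor [r]) 0 i) = baseColor [r] i := rfl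
    rw [this, baseColor_single, Nat.le_zero, hc.dist_eq_zero_iff]
    by_cases h : r = i <;> simp [h]
  | succ l ih =>
    intro i
    rw [hasOne_succ]
    constructor
    · rintro (h | ⟨y, hy, hone⟩)
      · have := (ih i).mp h
        omega
      · rw [show ((sLabel G (baseColor [r]) (l+1) i : LblT (l+1)) :
            LblT l × Multiset (LblT l)).2
            = (G.neighborFinset i).val.map (sLabel G (baseColor [r]) l) from rfl] at hy
        obtain ⟨w, hw, rfl⟩ := Multiset.mem_map.mp hy
        have hdw := (ih w).mp hone
        have hadj : G.Adj i w := (G.mem_neighborFinset i w).mp hw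
        have h1 : G.dist w i = 1 := dist_eq_one_iff_adj.mpr hadj.symm
        have := hc.dist_triangle (u := r) (v := w) (w := i)
        omega
    · intro h
      by_cases h' : G.dist r i ≤ l
      · exact Or.inl ((ih i).mpr h')
      · -- dist r i = l + 1
        have hd : G.dist r i = l + 1 := by omega
        obtain ⟨p, hl⟩ := hc.exists_walk_length_eq_dist i r
        have hpl : p.length = l + 1 := by rw [hl, dist_comm]; exact hd
        cases p with
        | nil => simp at hpl
        | cons hadj t =>
          rename_i w
          refine Or.inr ⟨sLabel G (baseColor [r]) l w, ?_, ?_⟩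
          · rw [show ((sLabel G (baseColor [r]) (l+1) i : LblT (l+1)) :
              LblT l × Multiset (LblT l)).2
              = (G.neighborFinset i).val.map (sLabel G (baseColor [r]) l) from rfl]
            exact Multiset.mem_map_of_mem _ ((G.mem_neighborFinset i w).mpr hadj)
          · refine (ih w).mpr ?_
            have : G.dist w r ≤ t.length := dist_le t
            simp only [Walk.length_cons] at hpl
            rw [dist_comm]
            omega

lemma dist_le_of_mem_support {G : SimpleGraph V} {r v u : V} (p : G.Walk r v)
    (hu : u ∈ p.support) : G.dist r u ≤ p.length :=
  le_trans (G.dist_le (p.takeUntil u hu)) (Walk.length_takeUntil_le p hu)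

lemma concat_isPath {G : SimpleGraph V} {r w v : V} {p : G.Walk r w} (hp : p.IsPath)
    (h : G.Adj w v) (hv : v ∉ p.support) : (p.concat h).IsPath := by
  rw [← isPath_reverse_iff, Walk.reverse_concat]
  refine (Walk.cons_isPath_iff _ _).mpr ⟨hp.reverse, ?_⟩
  rwa [Walk.support_reverse, List.mem_reverse]

lemma not_mem_support_of_dist_lt {G : SimpleGraph V} {r w v : V} {p : G.Walk r w}
    (hlen : p.length < G.dist r v) : v ∉ p.support := fun hv =>
  absurd (dist_le_of_mem_support p hv) (by omega)

/-- In a tree, adjacent vertices are at different distances from any root. -/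
lemma tree_adj_dist_ne {G : SimpleGraph V} (hT : G.IsTree) (r : V) {v w : V}
    (h : G.Adj w v) : G.dist r w ≠ G.dist r v := by
  intro he
  obtain ⟨p, hp, hl⟩ := hT.isConnected.exists_path_of_dist r w
  have hvp : v ∉ p.support := by
    intro hv
    have h1 : (p.takeUntil v hv).length ≤ p.length := Walk.length_takeUntil_le p hv
    have h2 : G.dist r v ≤ (p.takeUntil v hv).length := G.dist_le _
    have h4 : (p.dropUntil v hv).length = 0 := by
      have h3 := congrArg Walk.length (Walk.take_spec p hv)
      rw [Walk.length_append] at h3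
      omega
    exact h.ne' (Walk.eq_of_length_eq_zero h4)
  have hq : (p.concat h).IsPath := concat_isPath hp h hvp
  obtain ⟨p', hp', hl'⟩ := hT.isConnected.exists_path_of_dist r v
  obtain ⟨pp, -, hu⟩ := hT.existsUnique_path r v
  have := (hu _ hq).trans (hu _ hp').symm
  have := congrArg Walk.length this
  rw [Walk.length_concat, hl, hl', he] at this
  omega

/-- In a tree, the neighbor one step closer to the root is unique. -/
lemma tree_parent_unique {G : SimpleGraph V} (hT : G.IsTree) (r : V) {v w w' : V}
    (hw : G.Adj w v) (hw' : G.Adj w' v)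
    (hd : G.dist r w + 1 = G.dist r v) (hd' : G.dist r w' + 1 = G.dist r v) : w = w' := by
  obtain ⟨p, hp, hl⟩ := hT.isConnected.exists_path_of_dist r w
  obtain ⟨p', hp', hl'⟩ := hT.isConnected.exists_path_of_dist r w'
  have hq : (p.concat hw).IsPath :=
    concat_isPath hp hw (not_mem_support_of_dist_lt (by omega))
  have hq' : (p'.concat hw').IsPath :=
    concat_isPath hp' hw' (not_mem_support_of_dist_lt (by omega))
  obtain ⟨pp, -, hu⟩ := hT.existsUnique_path r v
  have heq : p.concat hw = p'.concat hw' := (hu _ hq).trans (hu _ hq').symm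
  have := congrArg (fun q => (Walk.reverse q).getVert 1) heq
  simpa [Walk.reverse_concat, Walk.getVert_cons_succ] using this

lemma exists_parent {G : SimpleGraph V} (hc : G.Connected) (r : V) {v : V}
    (hv : v ≠ r) : ∃ w, G.Adj w v ∧ G.dist r w + 1 = G.dist r v := by
  have hd : G.dist r v ≠ 0 := fun h0 => hv (hc.dist_eq_zero_iff.mp h0).symm
  obtain ⟨p, hl⟩ := hc.exists_walk_length_eq_dist v r
  cases p with
  | nil => exact absurd rfl hv
  | cons hadj t =>
    rename_i w
    refine ⟨w, hadj.symm, ?_⟩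
    have h1 : G.dist w r ≤ t.length := dist_le t
    have h2 : G.dist r v ≤ G.dist r w + G.dist w v := hc.dist_triangle
    have h3 : G.dist w v = 1 := dist_eq_one_iff_adj.mpr hadj.symm
    simp only [Walk.length_cons] at hl
    rw [SimpleGraph.dist_comm (u := v) (v := r)] at hl
    rw [SimpleGraph.dist_comm (u := w) (v := r)] at h1
    omega

/-- In a tree, an edge changes the distance to the root by exactly one. -/
lemma tree_adj_dist_cases {G : SimpleGraph V} (hT : G.IsTree) (r : V) {v w : V}
    (h : G.Adj w v) : G.dist r w + 1 = G.dist r v ∨ G.dist r v + 1 = G.dist r w := by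
  have h1 : G.dist r v ≤ G.dist r w + 1 := by
    have := hT.isConnected.dist_triangle (u := r) (v := w) (w := v)
    have h3 : G.dist w v = 1 := dist_eq_one_iff_adj.mpr h
    omega
  have h2 : G.dist r w ≤ G.dist r v + 1 := by
    have := hT.isConnected.dist_triangle (u := r) (v := v) (w := w)
    have h3 : G.dist v w = 1 := dist_eq_one_iff_adj.mpr h.symm
    omega
  have := tree_adj_dist_ne hT r h
  omega

end S1Proof

namespace S1Proof
open SimpleGraph

lemma exists_bijOn_of_map_eq {α β γ : Type*} [DecidableEq α] [DecidableEq β] [Nonempty β]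
    (s : Finset α) (t : Finset β) (f : α → γ) (g : β → γ)
    (h : s.val.map f = t.val.map g) :
    ∃ σ : α → β, Set.BijOn σ ↑s ↑t ∧ ∀ a ∈ s, f a = g (σ a) := by
  induction s using Finset.induction generalizing t with
  | empty =>
    have ht : t = ∅ := by
      rw [← Finset.val_eq_zero]
      by_contra hne
      obtain ⟨b, hb⟩ := Multiset.exists_mem_of_ne_zero hne
      have : g b ∈ t.val.map g := Multiset.mem_map_of_mem _ hb
      rw [← h] at this
      simp at this
    subst ht
    exact ⟨fun _ => Classical.arbitrary β, by simp [Set.bijOn_empty], by simp⟩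
  | @insert a s ha ih =>
    rw [Finset.insert_val_of_notMem ha, Multiset.map_cons] at h
    have hfa : f a ∈ t.val.map g := by rw [← h]; exact Multiset.mem_cons_self _ _
    obtain ⟨b, hb, hgb⟩ := Multiset.mem_map.mp hfa
    have hbt : b ∈ t := hb
    have ht : t.val = b ::ₘ (t.erase b).val := by
      rw [Finset.erase_val, Multiset.cons_erase hb]
    rw [ht, Multiset.map_cons, hgb] at h
    have h' := (Multiset.cons_inj_right _).mp h
    obtain ⟨σ, hσbij, hσ⟩ := ih (t.erase b) h'
    refine ⟨Function.update σ a b, ?_, ?_⟩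
    · have heq : Set.EqOn σ (Function.update σ a b) ↑s := fun x hx =>
        (Function.update_of_ne (fun hxa : x = a => ha (hxa ▸ Finset.mem_coe.mp hx)) _ _).symm
      have hbij' : Set.BijOn (Function.update σ a b) ↑s ↑(t.erase b) :=
        hσbij.congr heq
      have : Set.BijOn (Function.update σ a b) (insert a ↑s)
          (insert (Function.update σ a b a) ↑(t.erase b)) :=
        hbij'.insert (by simp [Function.update_self, Finset.mem_erase])
      rw [Function.update_self] at this
      rw [Finset.coe_insert, ← Finset.insert_erase hbt, Finset.coe_insert]
      exact this
    · intro x hx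
      rcases Finset.mem_insert.mp hx with rfl | hxs
      · rw [Function.update_self]; exact hgb.symm
      · rw [Function.update_of_ne (fun hxa : x = a => ha (hxa ▸ hxs)) b σ]

        exact hσ x hxs

lemma sLabel_down_eq {V₁ V₂ : Type} [Fintype V₁] [DecidableEq V₁]
    [Fintype V₂] [DecidableEq V₂] {G₁ : SimpleGraph V₁} {G₂ : SimpleGraph V₂}
    [DecidableRel G₁.Adj] [DecidableRel G₂.Adj] {c₁ : V₁ → ℕ} {c₂ : V₂ → ℕ}
    {a : V₁} {b : V₂} :
    ∀ {L l : ℕ}, l ≤ L → sLabel G₁ c₁ L a = sLabel G₂ c₂ L b →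
      sLabel G₁ c₁ l a = sLabel G₂ c₂ l b := by
  intro L
  induction L with
  | zero =>
    intro l hl h
    obtain rfl : l = 0 := Nat.le_zero.mp hl
    exact h
  | succ L ih =>
    intro l hl h
    rcases Nat.eq_or_lt_of_le hl with heq | hlt
    · subst heq; exact h
    · exact ih (by omega) (congrArg (down L) h)

lemma neighbors_map_eq {V₁ V₂ : Type} [Fintype V₁] [DecidableEq V₁]
    [Fintype V₂] [DecidableEq V₂] {G₁ : SimpleGraph V₁} {G₂ : SimpleGraph V₂}
    [DecidableRel G₁.Adj] [DecidableRel G₂.Adj] {c₁ : V₁ → ℕ} {c₂ : V₂ → ℕ}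
    {j : V₁} {j' : V₂} {L : ℕ}
    (h : sLabel G₁ c₁ (L + 1) j = sLabel G₂ c₂ (L + 1) j') :
    (G₁.neighborFinset j).val.map (sLabel G₁ c₁ L) =
      (G₂.neighborFinset j').val.map (sLabel G₂ c₂ L) :=
  congrArg (fun x : LblT L × Multiset (LblT L) => x.2) h

lemma exists_uniform_matching {V₁ V₂ : Type} [Fintype V₁] [DecidableEq V₁]
    [Fintype V₂] [DecidableEq V₂] [Nonempty V₂]
    (G₁ : SimpleGraph V₁) (G₂ : SimpleGraph V₂)
    [DecidableRel G₁.Adj] [DecidableRel G₂.Adj]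
    (c₁ : V₁ → ℕ) (c₂ : V₂ → ℕ) (s : Finset V₁) (t : Finset V₂)
    (h : ∀ L, s.val.map (sLabel G₁ c₁ L) = t.val.map (sLabel G₂ c₂ L)) :
    ∃ σ : V₁ → V₂, Set.BijOn σ ↑s ↑t ∧
      ∀ a ∈ s, ∀ l, sLabel G₁ c₁ l a = sLabel G₂ c₂ l (σ a) := by
  choose σf hbij hp using fun L => exists_bijOn_of_map_eq s t _ _ (h L)
  obtain ⟨g, hg⟩ := Finite.exists_infinite_fiber σf
  have hinf : (σf ⁻¹' {g}).Infinite := Set.infinite_coe_iff.mp hg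
  have hmem : ∀ l : ℕ, ∃ L, l ≤ L ∧ σf L = g := by
    intro l
    obtain ⟨L, hL1, hL2⟩ := hinf.exists_gt l
    exact ⟨L, le_of_lt hL2, hL1⟩
  refine ⟨g, ?_, ?_⟩
  · obtain ⟨L, -, hLg⟩ := hmem 0
    exact hLg ▸ hbij L
  · intro a ha l
    obtain ⟨L, hLl, hLg⟩ := hmem l
    have := hp L a ha
    rw [hLg] at this
    exact sLabel_down_eq hLl this

end S1Proof

namespace S1Proof
open SimpleGraph

section Main

variable {V : Type} [Fintype V] [DecidableEq V]

/-- The children of `j` in the tree rooted at `r`. -/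
noncomputable def children (G : SimpleGraph V) [DecidableRel G.Adj] (r j : V) : Finset V :=
  (G.neighborFinset j).filter (fun w => G.dist r w = G.dist r j + 1)

lemma mem_children {G : SimpleGraph V} [DecidableRel G.Adj] {r j w : V} :
    w ∈ children G r j ↔ G.Adj j w ∧ G.dist r w = G.dist r j + 1 := by
  simp [children, G.mem_neighborFinset]

open scoped Classical in
/-- The parent of `v` in the tree rooted at `r`. -/
noncomputable def parent (G : SimpleGraph V) (r v : V) : V :=
  if h : ∃ w, G.Adj w v ∧ G.dist r w + 1 = G.dist r v then h.choose else v

lemma parent_spec {G : SimpleGraph V} (hc : G.Connected) (r : V) {v : V} (hv : v ≠ r) :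
    G.Adj (parent G r v) v ∧ G.dist r (parent G r v) + 1 = G.dist r v := by
  have h := exists_parent hc r hv
  classical
  rw [parent, dif_pos h]
  exact h.choose_spec

lemma parent_eq {G : SimpleGraph V} (hT : G.IsTree) (r : V) {v w : V}
    (hadj : G.Adj w v) (hd : G.dist r w + 1 = G.dist r v) : parent G r v = w := by
  have hv : v ≠ r := by
    intro h
    have h0 : G.dist r v = 0 := hT.isConnected.dist_eq_zero_iff.mpr h.symm
    omega
  have hs := parent_spec hT.isConnected r hv
  exact tree_parent_unique hT r hs.1 hadj hs.2 hd

variable {V₁ V₂ : Type} [Fintype V₁] [DecidableEq V₁] [Fintype V₂] [DecidableEq V₂]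
variable (G₁ : SimpleGraph V₁) (G₂ : SimpleGraph V₂)
variable [DecidableRel G₁.Adj] [DecidableRel G₂.Adj] (r₁ : V₁) (r₂ : V₂)

/-- Equality of the full label rows (roots `r₁`, `r₂` distinguished). -/
def Rows (a : V₁) (b : V₂) : Prop :=
  ∀ l, sLabel G₁ (baseColor [r₁]) l a = sLabel G₂ (baseColor [r₂]) l b

variable {G₁ G₂ r₁ r₂}

lemma dist_eq_of_rows (hc₁ : G₁.Connected) (hc₂ : G₂.Connected) {a : V₁} {b : V₂}
    (h : Rows G₁ G₂ r₁ r₂ a b) : G₁.dist r₁ a = G₂.dist r₂ b := by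
  refine le_antisymm ?_ ?_
  · refine (hasOne_iff_dist_le G₁ hc₁ r₁ (G₂.dist r₂ b) a).mp ?_
    rw [h (G₂.dist r₂ b)]
    exact (hasOne_iff_dist_le G₂ hc₂ r₂ _ b).mpr le_rfl
  · refine (hasOne_iff_dist_le G₂ hc₂ r₂ (G₁.dist r₁ a) b).mp ?_
    rw [← h (G₁.dist r₁ a)]
    exact (hasOne_iff_dist_le G₁ hc₁ r₁ _ a).mpr le_rfl

lemma exists_child_matching (hT₁ : G₁.IsTree) (hT₂ : G₂.IsTree) {j : V₁} {j' : V₂}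
    (hjj : Rows G₁ G₂ r₁ r₂ j j') :
    ∃ g : V₁ → V₂, Set.BijOn g ↑(children G₁ r₁ j) ↑(children G₂ r₂ j') ∧
      ∀ w ∈ children G₁ r₁ j, Rows G₁ G₂ r₁ r₂ w (g w) := by
  haveI : Nonempty V₂ := hT₂.isConnected.nonempty
  obtain ⟨τ, hbij, hτ⟩ := exists_uniform_matching G₁ G₂ (baseColor [r₁]) (baseColor [r₂])
    (G₁.neighborFinset j) (G₂.neighborFinset j')
    (fun L => neighbors_map_eq (hjj (L + 1)))
  have hdj : G₁.dist r₁ j = G₂.dist r₂ j' :=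
    dist_eq_of_rows hT₁.isConnected hT₂.isConnected hjj
  have hrow : ∀ w ∈ children G₁ r₁ j, Rows G₁ G₂ r₁ r₂ w (τ w) := by
    intro w hw l
    exact hτ w (Finset.mem_filter.mp hw).1 l
  have hdist : ∀ w ∈ G₁.neighborFinset j, G₁.dist r₁ w = G₂.dist r₂ (τ w) := by
    intro w hw
    exact dist_eq_of_rows hT₁.isConnected hT₂.isConnected (fun l => hτ w hw l)
  refine ⟨τ, ⟨?_, ?_, ?_⟩, hrow⟩
  · -- MapsTo
    intro w hw
    rw [Finset.mem_coe, mem_children] at hw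
    have hwn : w ∈ G₁.neighborFinset j := (G₁.mem_neighborFinset j w).mpr hw.1
    have h1 : τ w ∈ (G₂.neighborFinset j' : Set V₂) := hbij.mapsTo (Finset.mem_coe.mpr hwn)
    rw [Finset.mem_coe, mem_children]
    exact ⟨(G₂.mem_neighborFinset j' (τ w)).mp (Finset.mem_coe.mp h1),
      by rw [← hdist w hwn, hw.2, hdj]⟩
  · -- InjOn
    intro w hw w' hw' he
    have h1 : w ∈ G₁.neighborFinset j := (Finset.mem_filter.mp (Finset.mem_coe.mp hw)).1
    have h2 : w' ∈ G₁.neighborFinset j := (Finset.mem_filter.mp (Finset.mem_coe.mp hw')).1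
    exact hbij.injOn (Finset.mem_coe.mpr h1) (Finset.mem_coe.mpr h2) he
  · -- SurjOn
    intro w' hw'
    rw [Finset.mem_coe, mem_children] at hw'
    have hwn' : w' ∈ (G₂.neighborFinset j' : Set V₂) :=
      Finset.mem_coe.mpr ((G₂.mem_neighborFinset j' w').mpr hw'.1)
    obtain ⟨w, hw, rfl⟩ := hbij.surjOn hwn'
    have hwmem : w ∈ G₁.neighborFinset j := Finset.mem_coe.mp hw
    refine ⟨w, ?_, rfl⟩
    rw [Finset.mem_coe, mem_children]
    refine ⟨(G₁.mem_neighborFinset j w).mp hwmem, ?_⟩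
    rw [hdist w hwmem, hw'.2, hdj]

end Main
end S1Proof

namespace S1Proof
open SimpleGraph

section Phi

variable {V₁ V₂ : Type} [Fintype V₁] [DecidableEq V₁] [Fintype V₂] [DecidableEq V₂]

open scoped Classical in
/-- A chosen matching of the children of `j` and `j'` preserving rows. -/
noncomputable def childMatch (G₁ : SimpleGraph V₁) (G₂ : SimpleGraph V₂)
    [DecidableRel G₁.Adj] [DecidableRel G₂.Adj] (r₁ : V₁) (r₂ : V₂)
    (j : V₁) (j' : V₂) : V₁ → V₂ :=
  if h : ∃ g : V₁ → V₂, Set.BijOn g ↑(children G₁ r₁ j) ↑(children G₂ r₂ j') ∧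
      ∀ w ∈ children G₁ r₁ j, Rows G₁ G₂ r₁ r₂ w (g w) then h.choose
  else fun _ => j'

variable {G₁ : SimpleGraph V₁} {G₂ : SimpleGraph V₂}
variable [DecidableRel G₁.Adj] [DecidableRel G₂.Adj] {r₁ : V₁} {r₂ : V₂}

lemma childMatch_spec (hT₁ : G₁.IsTree) (hT₂ : G₂.IsTree) {j : V₁} {j' : V₂}
    (hjj : Rows G₁ G₂ r₁ r₂ j j') :
    Set.BijOn (childMatch G₁ G₂ r₁ r₂ j j') ↑(children G₁ r₁ j) ↑(children G₂ r₂ j') ∧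
      ∀ w ∈ children G₁ r₁ j, Rows G₁ G₂ r₁ r₂ w (childMatch G₁ G₂ r₁ r₂ j j' w) := by
  classical
  have h := exists_child_matching hT₁ hT₂ hjj
  simp only [childMatch, dif_pos h]
  exact h.choose_spec

open scoped Classical in
/-- The isomorphism, built by structural recursion down the tree. -/
noncomputable def phi (G₁ : SimpleGraph V₁) (G₂ : SimpleGraph V₂)
    [DecidableRel G₁.Adj] [DecidableRel G₂.Adj] (r₁ : V₁) (r₂ : V₂)
    (hc₁ : G₁.Connected) (v : V₁) : V₂ :=
  if h : v = r₁ then r₂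
  else childMatch G₁ G₂ r₁ r₂ (parent G₁ r₁ v)
    (phi G₁ G₂ r₁ r₂ hc₁ (parent G₁ r₁ v)) v
termination_by G₁.dist r₁ v
decreasing_by
  have hs := parent_spec hc₁ r₁ h
  omega

variable (hT₁ : G₁.IsTree) (hT₂ : G₂.IsTree)

lemma phi_root (hc₁ : G₁.Connected) : phi G₁ G₂ r₁ r₂ hc₁ r₁ = r₂ := by
  rw [phi]; simp

lemma phi_ne (hc₁ : G₁.Connected) {v : V₁} (h : v ≠ r₁) :
    phi G₁ G₂ r₁ r₂ hc₁ v = childMatch G₁ G₂ r₁ r₂ (parent G₁ r₁ v)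
      (phi G₁ G₂ r₁ r₂ hc₁ (parent G₁ r₁ v)) v := by
  conv_lhs => rw [phi]
  exact dif_neg h

lemma dist_ne_zero_of_ne (hc : G₁.Connected) {v : V₁} (h : v ≠ r₁) :
    G₁.dist r₁ v ≠ 0 := fun h0 => h (hc.dist_eq_zero_iff.mp h0).symm

include hT₁ hT₂ in
lemma phi_rows (hr : Rows G₁ G₂ r₁ r₂ r₁ r₂) (v : V₁) :
    Rows G₁ G₂ r₁ r₂ v (phi G₁ G₂ r₁ r₂ hT₁.isConnected v) := by
  have key : ∀ d v, G₁.dist r₁ v = d →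
      Rows G₁ G₂ r₁ r₂ v (phi G₁ G₂ r₁ r₂ hT₁.isConnected v) := by
    intro d
    induction d using Nat.strong_induction_on with
    | _ d ih =>
      intro v hd
      by_cases h : v = r₁
      · subst h; rw [phi_root]; exact hr
      · have hs := parent_spec hT₁.isConnected r₁ h
        have hdp : G₁.dist r₁ (parent G₁ r₁ v) < d := by omega
        have ihp := ih _ hdp (parent G₁ r₁ v) rfl
        have cm := childMatch_spec hT₁ hT₂ ihp
        have hv : v ∈ children G₁ r₁ (parent G₁ r₁ v) :=
          mem_children.mpr ⟨hs.1, hs.2.symm⟩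
        rw [phi_ne hT₁.isConnected h]
        exact cm.2 v hv
  exact key _ v rfl

include hT₁ hT₂ in
lemma phi_dist (hr : Rows G₁ G₂ r₁ r₂ r₁ r₂) (v : V₁) :
    G₂.dist r₂ (phi G₁ G₂ r₁ r₂ hT₁.isConnected v) = G₁.dist r₁ v :=
  (dist_eq_of_rows hT₁.isConnected hT₂.isConnected (phi_rows hT₁ hT₂ hr v)).symm

include hT₁ hT₂ in
lemma phi_mem_children (hr : Rows G₁ G₂ r₁ r₂ r₁ r₂) {v : V₁} (h : v ≠ r₁) :
    phi G₁ G₂ r₁ r₂ hT₁.isConnected v ∈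
      children G₂ r₂ (phi G₁ G₂ r₁ r₂ hT₁.isConnected (parent G₁ r₁ v)) := by
  have hs := parent_spec hT₁.isConnected r₁ h
  have ihp := phi_rows hT₁ hT₂ hr (parent G₁ r₁ v)
  have cm := childMatch_spec hT₁ hT₂ ihp
  have hv : v ∈ children G₁ r₁ (parent G₁ r₁ v) :=
    mem_children.mpr ⟨hs.1, hs.2.symm⟩
  rw [phi_ne hT₁.isConnected h]
  exact Finset.mem_coe.mp (cm.1.mapsTo (Finset.mem_coe.mpr hv))

include hT₁ hT₂ in
lemma phi_parent (hr : Rows G₁ G₂ r₁ r₂ r₁ r₂) {v : V₁} (h : v ≠ r₁) :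
    parent G₂ r₂ (phi G₁ G₂ r₁ r₂ hT₁.isConnected v) =
      phi G₁ G₂ r₁ r₂ hT₁.isConnected (parent G₁ r₁ v) := by
  have hm := mem_children.mp (phi_mem_children hT₁ hT₂ hr h)
  exact parent_eq hT₂ r₂ hm.1 hm.2.symm

include hT₁ hT₂ in
lemma phi_inj (hr : Rows G₁ G₂ r₁ r₂ r₁ r₂) :
    Function.Injective (phi G₁ G₂ r₁ r₂ hT₁.isConnected) := by
  have key : ∀ d v w, G₁.dist r₁ v = d →
      phi G₁ G₂ r₁ r₂ hT₁.isConnected v = phi G₁ G₂ r₁ r₂ hT₁.isConnected w →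
      v = w := by
    intro d
    induction d using Nat.strong_induction_on with
    | _ d ih =>
      intro v w hd he
      have hdw : G₁.dist r₁ w = d := by
        rw [← phi_dist hT₁ hT₂ hr w, ← he, phi_dist hT₁ hT₂ hr v, hd]
      by_cases h : v = r₁
      · subst h
        have : d = 0 := by rw [← hd]; exact hT₁.isConnected.dist_eq_zero_iff.mpr rfl
        subst this
        exact (hT₁.isConnected.dist_eq_zero_iff.mp hdw)
      · have hw : w ≠ r₁ := by
          intro hw; subst hw
          have : d = 0 := by rw [← hdw]; exact hT₁.isConnected.dist_eq_zero_iff.mpr rfl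
          exact dist_ne_zero_of_ne hT₁.isConnected h (by omega)
        have hpv := phi_parent hT₁ hT₂ hr h
        have hpw := phi_parent hT₁ hT₂ hr hw
        have hpp : phi G₁ G₂ r₁ r₂ hT₁.isConnected (parent G₁ r₁ v) =
            phi G₁ G₂ r₁ r₂ hT₁.isConnected (parent G₁ r₁ w) := by
          rw [← hpv, ← hpw, he]
        have hsv := parent_spec hT₁.isConnected r₁ h
        have hdzero := dist_ne_zero_of_ne hT₁.isConnected h
        have hpe : parent G₁ r₁ v = parent G₁ r₁ w :=
          ih (G₁.dist r₁ (parent G₁ r₁ v)) (by omega) _ _ rfl hpp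
        have ihp := phi_rows hT₁ hT₂ hr (parent G₁ r₁ v)
        have cm := childMatch_spec hT₁ hT₂ ihp
        have hsw := parent_spec hT₁.isConnected r₁ hw
        have hv' : v ∈ children G₁ r₁ (parent G₁ r₁ v) :=
          mem_children.mpr ⟨hsv.1, hsv.2.symm⟩
        have hw' : w ∈ children G₁ r₁ (parent G₁ r₁ v) := by
          rw [hpe]
          exact mem_children.mpr ⟨hsw.1, hsw.2.symm⟩
        apply cm.1.injOn (Finset.mem_coe.mpr hv') (Finset.mem_coe.mpr hw')
        have e1 := phi_ne (G₂ := G₂) (r₂ := r₂) hT₁.isConnected h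
        have e2 := phi_ne (G₂ := G₂) (r₂ := r₂) hT₁.isConnected hw
        rw [← hpe] at e2
        rw [← e1, ← e2]
        exact he
  intro v w he
  exact key _ v w rfl he

include hT₁ hT₂ in
lemma phi_surj (hr : Rows G₁ G₂ r₁ r₂ r₁ r₂) :
    Function.Surjective (phi G₁ G₂ r₁ r₂ hT₁.isConnected) := by
  have key : ∀ d v', G₂.dist r₂ v' = d →
      ∃ v, phi G₁ G₂ r₁ r₂ hT₁.isConnected v = v' := by
    intro d
    induction d using Nat.strong_induction_on with
    | _ d ih =>
      intro v' hd
      by_cases h : v' = r₂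
      · exact ⟨r₁, by rw [phi_root]; exact h.symm⟩
      · have hs := parent_spec hT₂.isConnected r₂ h
        obtain ⟨p, hp⟩ := ih (G₂.dist r₂ (parent G₂ r₂ v')) (by omega) _ rfl
        have hrp := phi_rows hT₁ hT₂ hr p
        have cm := childMatch_spec hT₁ hT₂ hrp
        have hv' : v' ∈ children G₂ r₂ (phi G₁ G₂ r₁ r₂ hT₁.isConnected p) :=
          mem_children.mpr ⟨by rw [hp]; exact hs.1, by rw [hp]; omega⟩
        obtain ⟨w, hw, hww⟩ := cm.1.surjOn (Finset.mem_coe.mpr hv')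
        have hwc := Finset.mem_coe.mp hw
        have hwd := (mem_children.mp hwc).2
        have hw_ne : w ≠ r₁ := by
          intro hwr
          rw [hwr] at hwd
          have h0 : G₁.dist r₁ r₁ = 0 := hT₁.isConnected.dist_eq_zero_iff.mpr rfl
          omega
        have hpar : parent G₁ r₁ w = p :=
          parent_eq hT₁ r₁ (mem_children.mp hwc).1 (by omega)
        refine ⟨w, ?_⟩
        rw [phi_ne hT₁.isConnected hw_ne, hpar]
        exact hww
  intro v'
  exact key _ v' rfl

include hT₁ hT₂ in
lemma phi_adj_of_adj (hr : Rows G₁ G₂ r₁ r₂ r₁ r₂) {a b : V₁} (hab : G₁.Adj a b) :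
    G₂.Adj (phi G₁ G₂ r₁ r₂ hT₁.isConnected a) (phi G₁ G₂ r₁ r₂ hT₁.isConnected b) := by
  have hcase := tree_adj_dist_cases hT₁ r₁ (v := b) (w := a) hab
  rcases hcase with hc | hc
  · have hb_ne : b ≠ r₁ := by
      intro hbr
      rw [hbr] at hc
      have h0 : G₁.dist r₁ r₁ = 0 := hT₁.isConnected.dist_eq_zero_iff.mpr rfl
      omega
    have hm := mem_children.mp (phi_mem_children hT₁ hT₂ hr hb_ne)
    have hpar : parent G₁ r₁ b = a := parent_eq hT₁ r₁ hab hc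
    rw [hpar] at hm
    exact hm.1
  · have ha_ne : a ≠ r₁ := by
      intro har
      rw [har] at hc
      have h0 : G₁.dist r₁ r₁ = 0 := hT₁.isConnected.dist_eq_zero_iff.mpr rfl
      omega
    have hm := mem_children.mp (phi_mem_children hT₁ hT₂ hr ha_ne)
    have hpar : parent G₁ r₁ a = b := parent_eq hT₁ r₁ hab.symm hc
    rw [hpar] at hm
    exact hm.1.symm

include hT₁ hT₂ in
lemma adj_of_phi_adj (hr : Rows G₁ G₂ r₁ r₂ r₁ r₂) {a b : V₁}
    (hab : G₂.Adj (phi G₁ G₂ r₁ r₂ hT₁.isConnected a) (phi G₁ G₂ r₁ r₂ hT₁.isConnected b)) :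
    G₁.Adj a b := by
  set f := phi G₁ G₂ r₁ r₂ hT₁.isConnected with hf
  have hcase := tree_adj_dist_cases hT₂ r₂ (v := f b) (w := f a) hab
  rcases hcase with hc | hc
  · have hb_ne : b ≠ r₁ := by
      intro hbr
      rw [hbr, hf, phi_root] at hc
      have h0 : G₂.dist r₂ r₂ = 0 := hT₂.isConnected.dist_eq_zero_iff.mpr rfl
      omega
    have hp2 : parent G₂ r₂ (f b) = f a := parent_eq hT₂ r₂ hab hc
    have hfp : f (parent G₁ r₁ b) = f a := by
      rw [hf, ← phi_parent hT₁ hT₂ hr hb_ne, ← hf, hp2]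
    have := phi_inj hT₁ hT₂ hr hfp
    rw [← this]
    exact (parent_spec hT₁.isConnected r₁ hb_ne).1
  · have ha_ne : a ≠ r₁ := by
      intro har
      rw [har, hf, phi_root] at hc
      have h0 : G₂.dist r₂ r₂ = 0 := hT₂.isConnected.dist_eq_zero_iff.mpr rfl
      omega
    have hp2 : parent G₂ r₂ (f a) = f b := parent_eq hT₂ r₂ hab.symm hc
    have hfp : f (parent G₁ r₁ a) = f b := by
      rw [hf, ← phi_parent hT₁ hT₂ hr ha_ne, ← hf, hp2]
    have := phi_inj hT₁ hT₂ hr hfp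
    rw [← this]
    exact (parent_spec hT₁.isConnected r₁ ha_ne).1.symm

include hT₁ hT₂ in
lemma main_iso (hr : Rows G₁ G₂ r₁ r₂ r₁ r₂) : Nonempty (G₁ ≃g G₂) := by
  have hbij : Function.Bijective (phi G₁ G₂ r₁ r₂ hT₁.isConnected) :=
    ⟨phi_inj hT₁ hT₂ hr, phi_surj hT₁ hT₂ hr⟩
  refine ⟨⟨Equiv.ofBijective _ hbij, ?_⟩⟩
  intro a b
  simp only [Equiv.ofBijective_apply]
  exact ⟨adj_of_phi_adj hT₁ hT₂ hr, phi_adj_of_adj hT₁ hT₂ hr⟩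

end Phi
end S1Proof

namespace S1Proof
open SimpleGraph

section Easy

variable {V₁ V₂ : Type} [Fintype V₁] [DecidableEq V₁] [Fintype V₂] [DecidableEq V₂]
variable {G₁ : SimpleGraph V₁} {G₂ : SimpleGraph V₂}
variable [DecidableRel G₁.Adj] [DecidableRel G₂.Adj]

lemma iso_neighborFinset (φ : G₁ ≃g G₂) (i : V₁) :
    G₂.neighborFinset (φ i) = (G₁.neighborFinset i).map φ.toEquiv.toEmbedding := by
  ext w
  simp only [mem_neighborFinset, Finset.mem_map, Equiv.coe_toEmbedding]
  constructor
  · intro h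
    refine ⟨φ.symm w, ?_, by simp⟩
    rw [← φ.map_adj_iff]
    simpa using h
  · rintro ⟨u, hu, rfl⟩
    exact φ.map_adj_iff.mpr hu

lemma sLabel_map (φ : G₁ ≃g G₂) (c : V₂ → ℕ) :
    ∀ (l : ℕ) (i : V₁), sLabel G₁ (fun j => c (φ j)) l i = sLabel G₂ c l (φ i) := by
  intro l
  induction l with
  | zero => intro i; rfl
  | succ l ih =>
    intro i
    rw [sLabel_succ, sLabel_succ]
    refine Prod.ext (ih i) ?_
    show (G₁.neighborFinset i).val.map (sLabel G₁ (fun j => c (φ j)) l) =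
      (G₂.neighborFinset (φ i)).val.map (sLabel G₂ c l)
    rw [iso_neighborFinset φ i, Finset.map_val, Multiset.map_map]
    exact Multiset.map_congr rfl (fun j _ => ih j)

lemma sRow_map (φ : G₁ ≃g G₂) (i j : V₁) :
    sRow G₁ (baseColor [i]) j = sRow G₂ (baseColor [φ i]) (φ j) := by
  funext l
  have hc : (fun j => baseColor [φ i] (φ j)) = baseColor [i] := by
    funext j
    rw [baseColor_single, baseColor_single]
    simp [EmbeddingLike.apply_eq_iff_eq]
  show sLabel G₁ (baseColor [i]) l j = sLabel G₂ (baseColor [φ i]) l (φ j)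
  rw [← hc]
  exact sLabel_map φ (baseColor [φ i]) l j

lemma univ_val_map_equiv {f : V₁ → V₂} (hf : Function.Bijective f) (g : V₂ → AggT 0) :
    (Finset.univ : Finset V₂).val.map g =
      (Finset.univ : Finset V₁).val.map (fun i => g (f i)) := by
  have : (Finset.univ : Finset V₂) = Finset.univ.map (Equiv.ofBijective f hf).toEmbedding := by
    simp
  rw [this, Finset.map_val, Multiset.map_map]
  rfl

lemma sAgg_zero_eq (φ : G₁ ≃g G₂) (i : V₁) : sAgg G₁ 0 [i] = sAgg G₂ 0 [φ i] := by
  show (Finset.univ : Finset V₁).val.map (fun j => sRow G₁ (baseColor [i]) j) =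
    (Finset.univ : Finset V₂).val.map (fun j => sRow G₂ (baseColor [φ i]) j)
  have : (Finset.univ : Finset V₂) = Finset.univ.map φ.toEquiv.toEmbedding := by simp
  rw [this, Finset.map_val, Multiset.map_map]
  exact Multiset.map_congr rfl (fun j _ => sRow_map φ i j)

lemma fingerprint_one (G : SimpleGraph V₁) [DecidableRel G.Adj] :
    sFingerprint G 1 = (Finset.univ : Finset V₁).val.map (fun i => sAgg G 0 [i]) := by
  have e : sFingerprint G 1 =
      (Finset.univ.filter (fun i : V₁ => i ∉ ([] : List V₁))).val.map
        (fun i => sAgg G 0 ([] ++ [i])) := rfl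
  rw [e]
  have : (Finset.univ.filter (fun i : V₁ => i ∉ ([] : List V₁))) = Finset.univ := by simp
  rw [this]
  rfl

lemma fingerprint_eq_of_iso (φ : G₁ ≃g G₂) : sFingerprint G₁ 1 = sFingerprint G₂ 1 := by
  rw [fingerprint_one, fingerprint_one]
  have hb : Function.Bijective (φ : V₁ → V₂) := φ.toEquiv.bijective
  rw [univ_val_map_equiv hb (fun i => sAgg G₂ 0 [i])]
  exact Multiset.map_congr rfl (fun i _ => sAgg_zero_eq φ i)

end Easy
end S1Proof

/-- Two finite trees are isomorphic if and only if they are `𝔰¹`-equivalent, i.e. their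
`𝔰¹` fingerprints (the multisets of node label matrices) coincide. -/
theorem trees_iso_iff_s1_equiv {V₁ V₂ : Type} [Fintype V₁] [DecidableEq V₁]
    [Fintype V₂] [DecidableEq V₂] (G₁ : SimpleGraph V₁) (G₂ : SimpleGraph V₂)
    [DecidableRel G₁.Adj] [DecidableRel G₂.Adj]
    (h₁ : G₁.IsTree) (h₂ : G₂.IsTree) :
    Nonempty (G₁ ≃g G₂) ↔ sFingerprint G₁ 1 = sFingerprint G₂ 1 := by
  constructor
  · rintro ⟨φ⟩
    exact S1Proof.fingerprint_eq_of_iso φ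
  · intro hfp
    haveI hne₁ : Nonempty V₁ := h₁.isConnected.nonempty
    haveI hne₂ : Nonempty V₂ := h₂.isConnected.nonempty
    have hfp' : (Finset.univ : Finset V₁).val.map (fun i => sAgg G₁ 0 [i]) =
        (Finset.univ : Finset V₂).val.map (fun i => sAgg G₂ 0 [i]) := by
      rw [← S1Proof.fingerprint_one, ← S1Proof.fingerprint_one]
      exact hfp
    obtain ⟨σ, -, hσ⟩ := S1Proof.exists_bijOn_of_map_eq Finset.univ Finset.univ _ _ hfp'
    set i₁ := Classical.arbitrary V₁ with hi₁def
    have hmx : sAgg G₁ 0 [i₁] = sAgg G₂ 0 [σ i₁] := hσ i₁ (Finset.mem_univ _)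
    have hmx' : (Finset.univ : Finset V₁).val.map (sRow G₁ (baseColor [i₁])) =
        (Finset.univ : Finset V₂).val.map (sRow G₂ (baseColor [σ i₁])) := hmx
    obtain ⟨τ, -, hτ⟩ := S1Proof.exists_bijOn_of_map_eq Finset.univ Finset.univ _ _ hmx'
    have hrowi : sRow G₁ (baseColor [i₁]) i₁ = sRow G₂ (baseColor [σ i₁]) (τ i₁) :=
      hτ i₁ (Finset.mem_univ _)
    have h0 : S1Proof.lbl0 (sRow G₁ (baseColor [i₁]) i₁ 0) = baseColor [i₁] i₁ := rfl
    have h0' : S1Proof.lbl0 (sRow G₂ (baseColor [σ i₁]) (τ i₁) 0) =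
        baseColor [σ i₁] (τ i₁) := rfl
    have hc : baseColor [i₁] i₁ = baseColor [σ i₁] (τ i₁) := by
      rw [← h0, ← h0', hrowi]
    rw [S1Proof.baseColor_single, S1Proof.baseColor_single, if_pos rfl] at hc
    have heq : σ i₁ = τ i₁ := by
      by_contra hcon
      rw [if_neg hcon] at hc
      exact one_ne_zero hc
    have hrows : S1Proof.Rows G₁ G₂ i₁ (σ i₁) i₁ (σ i₁) := by
      intro l
      have hl := congrFun hrowi l
      rw [← heq] at hl
      exact hl
    exact S1Proof.main_iso h₁ h₂ hrows
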